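/- Let t ≥ 0 and n, d ≥ 1 be integers, and let u, v ∈ M_{n,d,t} with u ≥_slex v (≥_lex if t = 0), min(u) = 1 and min(v) > 1. Let I = (L_t(u,v)) ⊆ S = K[x_1,…,x_n]. Then I is a completely t-spread lexsegment ideal, i.e., I = (L^i_t(v)) ∩ (L^f_t(u)), if and only if the ideal I^{τ^t} = (L_0(u^{τ^t}, v^{τ^t})) is a completely 0-spread lexsegment ideal in the polynomial ring K[x_1,…,x_{n−(d−1)t}]. -/

import Mathlib

open MvPolynomial

/-- A degree-`d` `t`-spread monomial of `K[x_1,…,x_n]`, recorded by its weakly increasing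
(1-based) sequence of variable indices `idx 0 ≤ idx 1 ≤ ⋯` with consecutive gaps at least `t`.
For `t ≥ 1` these are exactly the `t`-spread monomials `x_{i_1}⋯x_{i_d}` with
`i_{j+1} - i_j ≥ t`, and for `t = 0` all monomials of degree `d` (written with sorted indices). -/
structure SpreadMono (n d t : ℕ) where
  idx : Fin d → ℕ
  one_le : ∀ j, 1 ≤ idx j
  le_n : ∀ j, idx j ≤ n
  spread : ∀ (j : Fin d) (h : (j : ℕ) + 1 < d), idx j + t ≤ idx ⟨(j : ℕ) + 1, h⟩

namespace SpreadMono

variable {n d t : ℕ}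

/-- The (0-based) variable of `Fin n` corresponding to the `j`-th (1-based) index. -/
def var (u : SpreadMono n d t) (j : Fin d) : Fin n :=
  ⟨u.idx j - 1, by have h1 := u.one_le j; have h2 := u.le_n j; omega⟩

/-- The exponent vector of the monomial `x_{i_1}⋯x_{i_d}`. -/
noncomputable def expVec (u : SpreadMono n d t) : Fin n →₀ ℕ :=
  ∑ j, Finsupp.single (u.var j) 1

/-- The monomial `x_{i_1}⋯x_{i_d}` as an element of `MvPolynomial (Fin n) K`. -/
noncomputable def toMvPoly (K : Type*) [Field K] (u : SpreadMono n d t) :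
    MvPolynomial (Fin n) K :=
  MvPolynomial.monomial u.expVec 1

/-- Strict lexicographic order on index sequences. -/
def seqLT (f g : Fin d → ℕ) : Prop :=
  ∃ s : Fin d, (∀ j, j < s → f j = g j) ∧ f s < g s

/-- Lexicographic order (≤) on index sequences. -/
def seqLE (f g : Fin d → ℕ) : Prop := f = g ∨ seqLT f g

/-- `u ≥_slex v`: a monomial is `slex`-larger iff its index sequence is lex-smaller. -/
def slexGE (u v : SpreadMono n d t) : Prop := seqLE u.idx v.idx

/-- `u >_slex v`. -/
def slexGT (u v : SpreadMono n d t) : Prop := seqLT u.idx v.idx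

/-- The `t`-spread lexsegment `L_t(u,v) = {w : u ≥_slex w ≥_slex v}`. -/
def lexseg (u v : SpreadMono n d t) : Set (SpreadMono n d t) :=
  {w | slexGE u w ∧ slexGE w v}

/-- The initial `t`-spread lexsegment `L^i_t(v) = {w : w ≥_slex v}`. -/
def initialSeg (v : SpreadMono n d t) : Set (SpreadMono n d t) :=
  {w | slexGE w v}

/-- The final `t`-spread lexsegment `L^f_t(u) = {w : w ≤_slex u}`. -/
def finalSeg (u : SpreadMono n d t) : Set (SpreadMono n d t) :=
  {w | slexGE u w}

/-- The ideal of `MvPolynomial (Fin n) K` generated by a set of spread monomials. -/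
noncomputable def idealOf (K : Type*) [Field K] (A : Set (SpreadMono n d t)) :
    Ideal (MvPolynomial (Fin n) K) :=
  Ideal.span ((fun w => toMvPoly K w) '' A)

end SpreadMono

/-- `a ≤_lex b` for exponent vectors of monomials of `K[x_1,…,x_m]`, for the lexicographic
order with `x_1 > x_2 > ⋯ > x_m`: either `a = b`, or at the first position where they
differ `b` has the larger exponent. -/
def monoLE {m : ℕ} (a b : Fin m →₀ ℕ) : Prop :=
  a = b ∨ ∃ i : Fin m, (∀ j, j < i → a j = b j) ∧ a i < b i

open SpreadMono

/- ====================  auxiliary development  ==================== -/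

namespace SpreadAux

open Finset

/-! ### Sequence lex order basics -/

theorem seqLE_total {d : ℕ} (f g : Fin d → ℕ) : seqLE f g ∨ seqLT g f := by
  by_cases h : f = g
  · exact Or.inl (Or.inl h)
  · have hex : ∃ j, f j ≠ g j := by
      by_contra hc; push_neg at hc; exact h (funext hc)
    obtain ⟨j0, hj0⟩ := hex
    set S : Finset (Fin d) := univ.filter (fun j => f j ≠ g j) with hS
    have hne : S.Nonempty := ⟨j0, by simp [hS, hj0]⟩
    set s := S.min' hne with hsdef
    have hs : f s ≠ g s := by
      have := S.min'_mem hne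
      simp only [hS, mem_filter, mem_univ, true_and] at this
      exact this
    have hpre : ∀ j, j < s → f j = g j := by
      intro j hj; by_contra hc
      exact absurd (S.min'_le j (by simp [hS, hc])) (not_le.mpr hj)
    rcases lt_or_gt_of_ne hs with h1 | h1
    · exact Or.inl (Or.inr ⟨s, hpre, h1⟩)
    · exact Or.inr ⟨s, fun j hj => (hpre j hj).symm, h1⟩

theorem seqLT_asymm {d : ℕ} {f g : Fin d → ℕ} (h1 : seqLT f g) (h2 : seqLT g f) : False := by
  obtain ⟨s1, hp1, hl1⟩ := h1
  obtain ⟨s2, hp2, hl2⟩ := h2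
  rcases lt_trichotomy s1 s2 with h | h | h
  · have := hp2 s1 h; omega
  · subst h; omega
  · have := hp1 s2 h; omega

theorem seqLE_seqLT_asymm {d : ℕ} {f g : Fin d → ℕ} (h1 : seqLE f g) (h2 : seqLT g f) :
    False := by
  rcases h1 with rfl | h1
  · obtain ⟨s, _, hl⟩ := h2; omega
  · exact seqLT_asymm h1 h2

theorem seqLT_trans {d : ℕ} {f g h : Fin d → ℕ} (h1 : seqLT f g) (h2 : seqLT g h) :
    seqLT f h := by
  obtain ⟨s1, hp1, hl1⟩ := h1
  obtain ⟨s2, hp2, hl2⟩ := h2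
  rcases lt_trichotomy s1 s2 with hc | hc | hc
  · exact ⟨s1, fun j hj => (hp1 j hj).trans (hp2 j (hj.trans hc)),
      by rw [← hp2 s1 hc]; exact hl1⟩
  · subst hc; exact ⟨s1, fun j hj => (hp1 j hj).trans (hp2 j hj), hl1.trans hl2⟩
  · exact ⟨s2, fun j hj => (hp1 j (hj.trans hc)).trans (hp2 j hj),
      by rw [hp1 s2 hc]; exact hl2⟩

theorem seqLE_trans {d : ℕ} {f g h : Fin d → ℕ} (h1 : seqLE f g) (h2 : seqLE g h) :
    seqLE f h := by
  rcases h1 with rfl | h1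
  · exact h2
  · rcases h2 with rfl | h2
    · exact Or.inr h1
    · exact Or.inr (seqLT_trans h1 h2)

theorem seqLE_of_pointwise {d : ℕ} {f g : Fin d → ℕ} (h : ∀ j, f j ≤ g j) : seqLE f g := by
  rcases seqLE_total f g with h1 | h1
  · exact h1
  · obtain ⟨s, _, hl⟩ := h1
    exact absurd (h s) (by omega)

theorem first_le_of_seqLT {d : ℕ} (hd : 1 ≤ d) {f g : Fin d → ℕ} (h : seqLT f g) :
    f ⟨0, hd⟩ ≤ g ⟨0, hd⟩ := by
  obtain ⟨s, hpre, hlt⟩ := h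
  by_cases hs : (s : ℕ) = 0
  · have hse : s = ⟨0, hd⟩ := Fin.ext hs
    rw [hse] at hlt; omega
  · have hlt0 : (⟨0, hd⟩ : Fin d) < s := by
      rw [Fin.lt_def]; simp only []; omega
    rw [hpre _ hlt0]

end SpreadAux

namespace SpreadAux

open Finset

/-! ### Counting values of sequences -/

def cnt {d : ℕ} (f : Fin d → ℕ) (m : ℕ) : ℕ := #(univ.filter (fun i => f i = m))

theorem card_filter_val_le {d : ℕ} (m : ℕ) (hmd : m < d) :
    #(univ.filter (fun i : Fin d => (i : ℕ) ≤ m)) = m + 1 := by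
  have himg : (univ.filter (fun i : Fin d => (i : ℕ) ≤ m)).image Fin.val
      = Finset.range (m + 1) := by
    ext a
    simp only [mem_image, mem_filter, mem_univ, true_and, mem_range]
    constructor
    · rintro ⟨i, hi, rfl⟩; omega
    · intro ha; exact ⟨⟨a, by omega⟩, by simpa using (by omega : a ≤ m), rfl⟩
  have hc := Finset.card_image_of_injective
    (univ.filter (fun i : Fin d => (i : ℕ) ≤ m)) Fin.val_injective
  rw [himg, Finset.card_range] at hc
  omega

theorem card_filter_val_lt {d : ℕ} (m : ℕ) (hmd : m ≤ d) :
    #(univ.filter (fun i : Fin d => (i : ℕ) < m)) = m := by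
  have himg : (univ.filter (fun i : Fin d => (i : ℕ) < m)).image Fin.val
      = Finset.range m := by
    ext a
    simp only [mem_image, mem_filter, mem_univ, true_and, mem_range]
    constructor
    · rintro ⟨i, hi, rfl⟩; omega
    · intro ha; exact ⟨⟨a, by omega⟩, by simpa using ha, rfl⟩
  have hc := Finset.card_image_of_injective
    (univ.filter (fun i : Fin d => (i : ℕ) < m)) Fin.val_injective
  rw [himg, Finset.card_range] at hc
  omega

theorem lt_card_of_mono_le {d : ℕ} {f : Fin d → ℕ} (hf : Monotone f) {j : Fin d} {N : ℕ}
    (h : f j ≤ N) : (j : ℕ) < #(univ.filter (fun i => f i ≤ N)) := by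
  have hsub : univ.filter (fun i : Fin d => (i : ℕ) ≤ (j : ℕ))
      ⊆ univ.filter (fun i => f i ≤ N) := by
    intro i hi
    simp only [mem_filter, mem_univ, true_and] at *
    exact le_trans (hf (Fin.le_def.mpr hi)) h
  have := Finset.card_le_card hsub
  rw [card_filter_val_le (j : ℕ) j.isLt] at this
  omega

theorem card_le_of_mono_gt {d : ℕ} {f : Fin d → ℕ} (hf : Monotone f) {j : Fin d} {N : ℕ}
    (h : N < f j) : #(univ.filter (fun i => f i ≤ N)) ≤ (j : ℕ) := by
  have hsub : univ.filter (fun i => f i ≤ N)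
      ⊆ univ.filter (fun i : Fin d => (i : ℕ) < (j : ℕ)) := by
    intro i hi
    simp only [mem_filter, mem_univ, true_and] at *
    by_contra hc
    have : j ≤ i := Fin.le_def.mpr (by omega)
    have := hf this
    omega
  have := Finset.card_le_card hsub
  rw [card_filter_val_lt (j : ℕ) (le_of_lt j.isLt)] at this
  omega

theorem card_filter_eq_sum_cnt {d B : ℕ} (f : Fin d → ℕ) (hfB : ∀ i, f i < B)
    (P : ℕ → Prop) [DecidablePred P] :
    #(univ.filter (fun i => P (f i))) = ∑ m ∈ (range B).filter P, cnt f m := by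
  rw [Finset.card_eq_sum_card_fiberwise (f := f) (t := (range B).filter P)
    (fun i hi => by
      simp only [mem_coe, mem_filter, mem_univ, true_and, mem_range] at *
      exact ⟨hfB i, hi⟩)]
  apply Finset.sum_congr rfl
  intro m hm
  simp only [mem_filter, mem_range] at hm
  unfold cnt
  congr 1
  ext i
  simp only [mem_filter, mem_univ, true_and]
  constructor
  · rintro ⟨_, h⟩; exact h
  · intro h; exact ⟨by rw [h]; exact hm.2, h⟩

theorem sum_cnt_eq {d B : ℕ} (f : Fin d → ℕ) (hfB : ∀ i, f i < B) :
    ∑ m ∈ range B, cnt f m = d := by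
  have := Finset.card_eq_sum_card_fiberwise (f := f) (s := univ) (t := range B)
    (fun i _ => by simpa using hfB i)
  simp only [Finset.card_univ, Fintype.card_fin] at this
  conv_rhs => rw [this]
  rfl

theorem mono_le_of_cnt_le {d e B : ℕ} {f : Fin d → ℕ} {g : Fin e → ℕ}
    (hf : Monotone f) (hg : Monotone g) (hfB : ∀ i, f i < B) (hgB : ∀ i, g i < B)
    (hcnt : ∀ m, cnt f m ≤ cnt g m) (j : Fin d) (k : Fin e)
    (hjk : e - (k : ℕ) ≤ d - (j : ℕ)) : f j ≤ g k := by
  by_contra hcon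
  push_neg at hcon
  set N := g k with hN
  have h1 : (k : ℕ) < #(univ.filter (fun i => g i ≤ N)) := lt_card_of_mono_le hg le_rfl
  have h2 : #(univ.filter (fun i => f i ≤ N)) ≤ (j : ℕ) := card_le_of_mono_gt hf hcon
  have h3 := card_filter_eq_sum_cnt f hfB (fun m => ¬ m ≤ N)
  have h4 := card_filter_eq_sum_cnt g hgB (fun m => ¬ m ≤ N)
  have h5 : ∑ m ∈ (range B).filter (fun m => ¬ m ≤ N), cnt f m
      ≤ ∑ m ∈ (range B).filter (fun m => ¬ m ≤ N), cnt g m :=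
    Finset.sum_le_sum (fun m _ => hcnt m)
  have h6 : #(univ.filter (fun i => f i ≤ N)) + #(univ.filter (fun i => ¬ f i ≤ N))
      = d := by
    rw [Finset.card_filter_add_card_filter_not]
    simp
  have h7 : #(univ.filter (fun i => g i ≤ N)) + #(univ.filter (fun i => ¬ g i ≤ N))
      = e := by
    rw [Finset.card_filter_add_card_filter_not]
    simp
  have hj := j.isLt
  have hk := k.isLt
  omega

end SpreadAux

namespace SpreadAux

open Finset

/-! ### SpreadMono basics -/

theorem SpreadMono.ext' {n d t : ℕ} {a b : SpreadMono n d t} (h : a.idx = b.idx) : a = b := by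
  cases a; cases b; cases h; rfl

theorem idx_add {n d t : ℕ} (w : SpreadMono n d t) :
    ∀ (b : ℕ) (hb : b < d) (a : ℕ) (ha : a ≤ b),
      w.idx ⟨a, by omega⟩ + (b - a) * t ≤ w.idx ⟨b, hb⟩ := by
  intro b
  induction b with
  | zero =>
    intro hb a ha
    have : a = 0 := by omega
    subst this
    simp
  | succ b ih =>
    intro hb a ha
    by_cases hab : a = b + 1
    · subst hab; simp
    · have ha' : a ≤ b := by omega
      have h1 := ih (by omega) a ha'
      have h2 := w.spread ⟨b, by omega⟩ (by simpa using hb)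
      have h3 : (b + 1 - a) * t = (b - a) * t + t := by
        rw [Nat.succ_sub ha', Nat.succ_mul]
      simp only [] at h2
      omega

theorem idx_ge {n d t : ℕ} (w : SpreadMono n d t) (j : Fin d) :
    1 + (j : ℕ) * t ≤ w.idx j := by
  have hj := j.isLt
  have h1 := idx_add w (j : ℕ) j.isLt 0 (Nat.zero_le _)
  have h2 := w.one_le ⟨0, by omega⟩
  have he : (⟨(j : ℕ), j.isLt⟩ : Fin d) = j := Fin.ext rfl
  rw [he, Nat.sub_zero] at h1
  omega

theorem idx_mono {n d t : ℕ} (w : SpreadMono n d t) : Monotone w.idx := by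
  intro a b hab
  have h := idx_add w (b : ℕ) b.isLt (a : ℕ) (Fin.le_def.mp hab)
  have hea : (⟨(a : ℕ), by omega⟩ : Fin d) = a := Fin.ext rfl
  have heb : (⟨(b : ℕ), b.isLt⟩ : Fin d) = b := Fin.ext rfl
  rw [hea, heb] at h
  omega

theorem mul_lt_idx {n d t : ℕ} (w : SpreadMono n d t) (j : Fin d) :
    (j : ℕ) * t < w.idx j := by
  have := idx_ge w j; omega

/-! ### expVec and counts -/

theorem expVec_apply {n d t : ℕ} (w : SpreadMono n d t) (i : Fin n) :
    expVec w i = cnt w.idx ((i : ℕ) + 1) := by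
  unfold SpreadMono.expVec cnt
  rw [Finsupp.finset_sum_apply, Finset.card_filter]
  apply Finset.sum_congr rfl
  intro j _
  rw [Finsupp.single_apply]
  have hiff : (w.var j = i) ↔ (w.idx j = (i : ℕ) + 1) := by
    rw [Fin.ext_iff]
    unfold SpreadMono.var
    have := w.one_le j
    simp only []
    omega
  by_cases hc : w.var j = i
  · rw [if_pos hc, if_pos (hiff.mp hc)]
  · rw [if_neg hc, if_neg (fun h => hc (hiff.mpr h))]

theorem cnt_eq_zero_of_gt {n d t : ℕ} (w : SpreadMono n d t) {m : ℕ} (hm : n < m) :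
    cnt w.idx m = 0 := by
  unfold cnt
  rw [Finset.card_eq_zero, Finset.filter_eq_empty_iff]
  intro j _
  have := w.le_n j
  omega

theorem cnt_zero_eq_zero {n d t : ℕ} (w : SpreadMono n d t) : cnt w.idx 0 = 0 := by
  unfold cnt
  rw [Finset.card_eq_zero, Finset.filter_eq_empty_iff]
  intro j _
  have := w.one_le j
  omega

end SpreadAux

namespace SpreadAux

open Finset

/-! ### The candidate monomial `x1 · w2 / x_{min w2}` and the characterization condition -/

def cand {n d t : ℕ} (w2 : SpreadMono n d t) : Fin d → ℕ :=
  fun j => if (j : ℕ) = 0 then 1 else w2.idx j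

def Dcond {n d t : ℕ} (u v : SpreadMono n d t) : Prop :=
  ∀ w2 : SpreadMono n d t, slexGT v w2 → seqLE u.idx (cand w2)

def Mem {n d t : ℕ} (u v : SpreadMono n d t) : Prop :=
  ∀ a : Fin n →₀ ℕ,
    (∃ w1, slexGE w1 v ∧ expVec w1 ≤ a) →
    (∃ w2, slexGE u w2 ∧ expVec w2 ≤ a) →
    ∃ w, (slexGE u w ∧ slexGE w v) ∧ expVec w ≤ a

def candMono {n d t : ℕ} (hn : 1 ≤ n) (hd : 1 ≤ d) (w2 : SpreadMono n d t)
    (hw2f : 2 ≤ w2.idx ⟨0, hd⟩) : SpreadMono n d t where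
  idx := cand w2
  one_le := by
    intro j
    simp only [cand]
    split
    · omega
    · exact w2.one_le j
  le_n := by
    intro j
    simp only [cand]
    split
    · omega
    · exact w2.le_n j
  spread := by
    intro j h
    simp only [cand]
    by_cases hj : (j : ℕ) = 0
    · rw [if_pos hj, if_neg (by exact Nat.succ_ne_zero _ : ¬ ((j : ℕ) + 1 = 0))]
      have h2 := w2.spread j h
      have h0 : w2.idx ⟨0, hd⟩ ≤ w2.idx j := idx_mono w2 (Fin.le_def.mpr (Nat.zero_le _))
      omega
    · rw [if_neg hj, if_neg (by exact Nat.succ_ne_zero _ : ¬ ((j : ℕ) + 1 = 0))]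
      exact w2.spread j h

theorem cnt_one_eq_zero_of_first {n d t : ℕ} (hd : 1 ≤ d) (w2 : SpreadMono n d t)
    (hw2f : 2 ≤ w2.idx ⟨0, hd⟩) : cnt w2.idx 1 = 0 := by
  unfold cnt
  rw [Finset.card_eq_zero, Finset.filter_eq_empty_iff]
  intro j _
  have := idx_mono w2 (show (⟨0, hd⟩ : Fin d) ≤ j from Fin.le_def.mpr (Nat.zero_le _))
  omega

theorem cnt_cand_one_le {n d t : ℕ} (hd : 1 ≤ d) (w2 : SpreadMono n d t)
    (hw2f : 2 ≤ w2.idx ⟨0, hd⟩) : cnt (cand w2) 1 ≤ 1 := by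
  unfold cnt
  have hsub : univ.filter (fun j => cand w2 j = 1) ⊆ {(⟨0, hd⟩ : Fin d)} := by
    intro j hj
    simp only [mem_filter, mem_univ, true_and, mem_singleton] at *
    by_contra hne
    have hj0 : (j : ℕ) ≠ 0 := fun h => hne (Fin.ext h)
    simp only [cand] at hj
    rw [if_neg hj0] at hj
    have := idx_mono w2 (show (⟨0, hd⟩ : Fin d) ≤ j from Fin.le_def.mpr (Nat.zero_le _))
    omega
  have := Finset.card_le_card hsub
  simpa using this

theorem cnt_cand_ge2_le {n d t : ℕ} (w2 : SpreadMono n d t) (m : ℕ) (hm : 2 ≤ m) :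
    cnt (cand w2) m ≤ cnt w2.idx m := by
  unfold cnt
  apply Finset.card_le_card
  intro j hj
  simp only [mem_filter, mem_univ, true_and] at *
  simp only [cand] at hj
  by_cases hj0 : (j : ℕ) = 0
  · rw [if_pos hj0] at hj; omega
  · rw [if_neg hj0] at hj; exact hj

/-! ### The extended sequence `(1, w2_0, …, w2_{d-1})` -/

def extSeq {n d t : ℕ} (w2 : SpreadMono n d t) : Fin (d + 1) → ℕ :=
  fun j => if hj : (j : ℕ) = 0 then 1
    else w2.idx ⟨(j : ℕ) - 1, by have := j.isLt; omega⟩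

theorem extSeq_lt {n d t : ℕ} (w2 : SpreadMono n d t) (j : Fin (d + 1)) :
    extSeq w2 j < n + 2 := by
  unfold extSeq
  split
  · omega
  · have := w2.le_n ⟨(j : ℕ) - 1, by have := j.isLt; omega⟩; omega

theorem extSeq_mono {n d t : ℕ} (w2 : SpreadMono n d t) : Monotone (extSeq w2) := by
  intro p q hpq
  have hpq' : (p : ℕ) ≤ (q : ℕ) := Fin.le_def.mp hpq
  unfold extSeq
  by_cases hq : (q : ℕ) = 0
  · rw [dif_pos (by omega : (p : ℕ) = 0), dif_pos hq]
  · by_cases hp : (p : ℕ) = 0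
    · rw [dif_pos hp, dif_neg hq]
      exact w2.one_le _
    · rw [dif_neg hp, dif_neg hq]
      exact idx_mono w2 (Fin.le_def.mpr (by show (p : ℕ) - 1 ≤ (q : ℕ) - 1; omega))

theorem cnt_extSeq_one {n d t : ℕ} (w2 : SpreadMono n d t) :
    1 ≤ cnt (extSeq w2) 1 := by
  unfold cnt
  rw [Nat.one_le_iff_ne_zero, ← Nat.pos_iff_ne_zero, Finset.card_pos]
  refine ⟨⟨0, by omega⟩, ?_⟩
  simp only [mem_filter, mem_univ, true_and]
  unfold extSeq
  rw [dif_pos rfl]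

theorem cnt_le_extSeq {n d t : ℕ} (w2 : SpreadMono n d t) (m : ℕ) (hm : m ≠ 1) :
    cnt w2.idx m ≤ cnt (extSeq w2) m := by
  unfold cnt
  apply Finset.card_le_card_of_injOn (f := Fin.succ)
  · intro j hj
    simp only [mem_coe, mem_filter, mem_univ, true_and] at *
    unfold extSeq
    rw [dif_neg (by simp : ¬ ((Fin.succ j : ℕ) = 0))]
    have he : (⟨(Fin.succ j : ℕ) - 1, by have := j.isLt; rw [Fin.val_succ]; omega⟩ : Fin d) = j :=
      Fin.ext (by simp)
    rw [he]
    exact hj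
  · exact fun p _ q _ h => Fin.succ_injective _ h

end SpreadAux

namespace SpreadAux

open Finset

/-! ### The characterization: `Mem ↔ Dcond` -/

theorem cand_zero {n d t : ℕ} (hd : 1 ≤ d) (w2 : SpreadMono n d t) :
    cand w2 ⟨0, hd⟩ = 1 := if_pos rfl

theorem cand_pos {n d t : ℕ} (w2 : SpreadMono n d t) {j : Fin d} (hj : (j : ℕ) ≠ 0) :
    cand w2 j = w2.idx j := if_neg hj

theorem mem_of_D {n d t : ℕ} (hn : 1 ≤ n) (hd : 1 ≤ d) {u v : SpreadMono n d t}
    (humin : u.idx ⟨0, hd⟩ = 1) (hvmin : 1 < v.idx ⟨0, hd⟩)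
    (hD : Dcond u v) : Mem u v := by
  rintro a ⟨w1, hw1v, hw1a⟩ ⟨w2, huw2, hw2a⟩
  rcases seqLE_total u.idx w1.idx with h | h
  · exact ⟨w1, ⟨h, hw1v⟩, hw1a⟩
  rcases seqLE_total w2.idx v.idx with h2 | h2
  · exact ⟨w2, ⟨huw2, h2⟩, hw2a⟩
  have hw1f : w1.idx ⟨0, hd⟩ = 1 := by
    have := first_le_of_seqLT hd h
    have h1 := w1.one_le ⟨0, hd⟩
    omega
  have hw2f : 2 ≤ w2.idx ⟨0, hd⟩ := by
    have := first_le_of_seqLT hd h2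
    omega
  refine ⟨candMono hn hd w2 hw2f, ⟨?_, ?_⟩, ?_⟩
  · exact hD w2 h2
  · refine Or.inr ⟨⟨0, hd⟩, fun j hj => absurd (Fin.lt_def.mp hj) (Nat.not_lt_zero _), ?_⟩
    show cand w2 ⟨0, hd⟩ < v.idx ⟨0, hd⟩
    rw [cand_zero hd]
    omega
  · rw [Finsupp.le_def]
    intro i
    rw [expVec_apply]
    show cnt (cand w2) ((i : ℕ) + 1) ≤ a i
    by_cases hi : (i : ℕ) = 0
    · rw [show (i : ℕ) + 1 = 1 by omega]
      have hle1 : cnt (cand w2) 1 ≤ 1 := cnt_cand_one_le hd w2 hw2f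
      have h1a : 1 ≤ a i := by
        have hle := Finsupp.le_def.mp hw1a i
        rw [expVec_apply] at hle
        have hpos : 0 < cnt w1.idx ((i : ℕ) + 1) := by
          rw [show (i : ℕ) + 1 = 1 by omega]
          exact Finset.card_pos.mpr ⟨⟨0, hd⟩, by
            simp only [mem_filter, mem_univ, true_and]; exact hw1f⟩
        omega
      omega
    · have hle := Finsupp.le_def.mp hw2a i
      rw [expVec_apply] at hle
      have hc := cnt_cand_ge2_le w2 ((i : ℕ) + 1) (by omega)
      omega

theorem D_of_mem {n d t : ℕ} (hn : 1 ≤ n) (hd : 1 ≤ d) {u v : SpreadMono n d t}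
    (humin : u.idx ⟨0, hd⟩ = 1) (hvmin : 1 < v.idx ⟨0, hd⟩)
    (hM : Mem u v) : Dcond u v := by
  intro w2 hvw2
  by_contra hnle
  have hlt : seqLT (cand w2) u.idx := (seqLE_total u.idx (cand w2)).resolve_left hnle
  have hw2f : 2 ≤ w2.idx ⟨0, hd⟩ := by
    have := first_le_of_seqLT hd hvw2; omega
  have hw2cnt1 : cnt w2.idx 1 = 0 := cnt_one_eq_zero_of_first hd w2 hw2f
  set c := candMono hn hd w2 hw2f with hcdef
  set i0 : Fin n := ⟨0, by omega⟩ with hi0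
  set a : Fin n →₀ ℕ := Finsupp.single i0 1 + expVec w2 with ha
  have happly : ∀ i : Fin n, a i = (if i0 = i then 1 else 0) + cnt w2.idx ((i : ℕ) + 1) := by
    intro i
    rw [ha, Finsupp.add_apply, Finsupp.single_apply, expVec_apply]
  have hca : expVec c ≤ a := by
    rw [Finsupp.le_def]
    intro i
    rw [expVec_apply, happly]
    show cnt (cand w2) ((i : ℕ) + 1) ≤ _
    by_cases hi : (i : ℕ) = 0
    · rw [if_pos (Fin.ext (by show (0 : ℕ) = (i : ℕ); omega) : i0 = i),
        show (i : ℕ) + 1 = 1 by omega]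
      have := cnt_cand_one_le hd w2 hw2f
      omega
    · rw [if_neg (fun hh => hi (by rw [← hh]))]
      have := cnt_cand_ge2_le w2 ((i : ℕ) + 1) (by omega)
      omega
  have hw2le : expVec w2 ≤ a := by
    rw [Finsupp.le_def]
    intro i
    rw [happly, expVec_apply]
    exact Nat.le_add_left _ _
  have hcv : slexGE c v := by
    refine Or.inr ⟨⟨0, hd⟩, fun j hj => absurd (Fin.lt_def.mp hj) (Nat.not_lt_zero _), ?_⟩
    show cand w2 ⟨0, hd⟩ < v.idx ⟨0, hd⟩
    rw [cand_zero hd]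
    omega
  have huw2 : slexGE u w2 := by
    refine Or.inr ⟨⟨0, hd⟩, fun j hj => absurd (Fin.lt_def.mp hj) (Nat.not_lt_zero _), ?_⟩
    omega
  obtain ⟨w, ⟨huw, hwv⟩, hwa⟩ := hM a ⟨c, hcv, hca⟩ ⟨w2, huw2, hw2le⟩
  have hwa' : ∀ i : Fin n,
      cnt w.idx ((i : ℕ) + 1) ≤ (if i0 = i then 1 else 0) + cnt w2.idx ((i : ℕ) + 1) := by
    intro i
    have hle := Finsupp.le_def.mp hwa i
    rw [expVec_apply, happly] at hle
    exact hle
  have hw1le : cnt w.idx 1 ≤ 1 := by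
    have := hwa' i0
    rw [if_pos rfl] at this
    rw [show ((i0 : ℕ) + 1) = 1 from rfl] at this
    omega
  have hwm : ∀ m, m ≠ 1 → cnt w.idx m ≤ cnt w2.idx m := by
    intro m hm
    rcases Nat.eq_zero_or_pos m with hm0 | hm0
    · subst hm0
      rw [cnt_zero_eq_zero w, cnt_zero_eq_zero w2]
    · by_cases hmn : m ≤ n
      · have hkey := hwa' ⟨m - 1, by omega⟩
        rw [if_neg (show ¬ i0 = ⟨m - 1, by omega⟩ from fun hh => by
          have h2 : (0 : ℕ) = m - 1 := congrArg Fin.val hh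
          omega)] at hkey
        rw [show ((⟨m - 1, by omega⟩ : Fin n) : ℕ) + 1 = m by show m - 1 + 1 = m; omega]
          at hkey
        omega
      · rw [cnt_eq_zero_of_gt w (by omega)]
        exact Nat.zero_le _
  by_cases hw0 : w.idx ⟨0, hd⟩ = 1
  · -- `w` starts with `x1`; then `w ≥slex cand w2 >slex u`, contradiction with `u ≥slex w`.
    have hcnt_wh : ∀ m, cnt w.idx m ≤ cnt (extSeq w2) m := by
      intro m
      by_cases hm : m = 1
      · subst hm
        have := cnt_extSeq_one w2
        omega
      · exact le_trans (hwm m hm) (cnt_le_extSeq w2 m hm)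
    have hpw : ∀ j : Fin d, w.idx j ≤ cand w2 j := by
      intro j
      by_cases hj : (j : ℕ) = 0
      · have hje : j = ⟨0, hd⟩ := Fin.ext hj
        rw [hje, hw0, cand_zero hd]
      · have hkey := mono_le_of_cnt_le (idx_mono w) (extSeq_mono w2) (B := n + 2)
          (fun i => by have := w.le_n i; omega) (extSeq_lt w2) hcnt_wh j
          (Fin.succ j) (by rw [Fin.val_succ]; omega)
        have hext : extSeq w2 (Fin.succ j) = w2.idx j := by
          unfold extSeq
          rw [dif_neg (by simp : ¬ ((Fin.succ j : ℕ) = 0))]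
          have he : (⟨(Fin.succ j : ℕ) - 1, by have := j.isLt; rw [Fin.val_succ]; omega⟩ :
              Fin d) = j := Fin.ext (by simp)
          rw [he]
        rw [hext] at hkey
        rw [cand_pos w2 hj]
        exact hkey
    exact hnle (seqLE_trans huw (seqLE_of_pointwise hpw))
  · -- `w` does not involve `x1`; then `w = w2 <slex v`, contradiction with `w ≥slex v`.
    have hw0' : 2 ≤ w.idx ⟨0, hd⟩ := by
      have := w.one_le ⟨0, hd⟩; omega
    have hwcnt1 : cnt w.idx 1 = 0 := cnt_one_eq_zero_of_first hd w hw0'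
    have hcle : ∀ m, cnt w.idx m ≤ cnt w2.idx m := by
      intro m
      by_cases hm : m = 1
      · subst hm; rw [hwcnt1]; exact Nat.zero_le _
      · exact hwm m hm
    have hsum1 := sum_cnt_eq w.idx (B := n + 1) (fun i => by have := w.le_n i; omega)
    have hsum2 := sum_cnt_eq w2.idx (B := n + 1) (fun i => by have := w2.le_n i; omega)
    have heq : ∀ m ∈ range (n + 1), cnt w.idx m = cnt w2.idx m :=
      (Finset.sum_eq_sum_iff_of_le (fun m _ => hcle m)).mp (hsum1.trans hsum2.symm)
    have hcge : ∀ m, cnt w2.idx m ≤ cnt w.idx m := by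
      intro m
      by_cases hm : m < n + 1
      · rw [heq m (mem_range.mpr hm)]
      · rw [cnt_eq_zero_of_gt w2 (by omega)]
        exact Nat.zero_le _
    have heqidx : w.idx = w2.idx := by
      funext j
      exact le_antisymm
        (mono_le_of_cnt_le (idx_mono w) (idx_mono w2) (B := n + 1)
          (fun i => by have := w.le_n i; omega) (fun i => by have := w2.le_n i; omega)
          hcle j j (le_refl _))
        (mono_le_of_cnt_le (idx_mono w2) (idx_mono w) (B := n + 1)
          (fun i => by have := w2.le_n i; omega) (fun i => by have := w.le_n i; omega)
          hcge j j (le_refl _))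
    exact seqLE_seqLT_asymm (heqidx ▸ hwv) hvw2

end SpreadAux

namespace SpreadAux

open Finset

/-! ### Ideal equality reduces to the membership condition -/

theorem mem_idealOf {n d t : ℕ} {K : Type*} [Field K] {A : Set (SpreadMono n d t)}
    {p : MvPolynomial (Fin n) K} :
    p ∈ idealOf K A ↔ ∀ a ∈ p.support, ∃ w ∈ A, expVec w ≤ a := by
  unfold SpreadMono.idealOf SpreadMono.toMvPoly
  rw [show ((fun w : SpreadMono n d t => (MvPolynomial.monomial (expVec w) (1 : K))) '' A)
      = ((fun s => MvPolynomial.monomial s (1 : K)) '' (expVec '' A)) by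
    rw [Set.image_image]]
  rw [MvPolynomial.mem_ideal_span_monomial_image]
  constructor
  · intro h a ha
    obtain ⟨si, hsi, hle⟩ := h a ha
    obtain ⟨w, hw, rfl⟩ := hsi
    exact ⟨w, hw, hle⟩
  · intro h a ha
    obtain ⟨w, hw, hle⟩ := h a ha
    exact ⟨expVec w, ⟨w, hw, rfl⟩, hle⟩

theorem idealEq_iff_mem {n d t : ℕ} (K : Type*) [Field K] (u v : SpreadMono n d t) :
    (idealOf K (lexseg u v) = idealOf K (initialSeg v) ⊓ idealOf K (finalSeg u)) ↔
      Mem u v := by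
  classical
  have hsub : idealOf K (lexseg u v)
      ≤ idealOf K (initialSeg v) ⊓ idealOf K (finalSeg u) := by
    apply le_inf
    · exact Ideal.span_mono (Set.image_mono (fun w hw => hw.2))
    · exact Ideal.span_mono (Set.image_mono (fun w hw => hw.1))
  constructor
  · intro heq a hex1 hex2
    obtain ⟨w1, hw1, hw1a⟩ := hex1
    obtain ⟨w2, hw2, hw2a⟩ := hex2
    have hsupp : ∀ b ∈ (MvPolynomial.monomial a (1 : K)).support, b = a := by
      intro b hb
      rw [MvPolynomial.support_monomial, if_neg one_ne_zero] at hb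
      simpa using hb
    have h1 : (MvPolynomial.monomial a (1 : K)) ∈ idealOf K (initialSeg v) :=
      mem_idealOf.mpr (fun b hb => by rw [hsupp b hb]; exact ⟨w1, hw1, hw1a⟩)
    have h2 : (MvPolynomial.monomial a (1 : K)) ∈ idealOf K (finalSeg u) :=
      mem_idealOf.mpr (fun b hb => by rw [hsupp b hb]; exact ⟨w2, hw2, hw2a⟩)
    have h3 : (MvPolynomial.monomial a (1 : K)) ∈ idealOf K (lexseg u v) := by
      rw [heq]; exact Submodule.mem_inf.mpr ⟨h1, h2⟩
    have ha : a ∈ (MvPolynomial.monomial a (1 : K)).support := by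
      rw [MvPolynomial.support_monomial, if_neg one_ne_zero]; simp
    obtain ⟨w, hw, hwa⟩ := mem_idealOf.mp h3 a ha
    exact ⟨w, hw, hwa⟩
  · intro hmem
    refine le_antisymm hsub ?_
    intro p hp
    obtain ⟨hpi, hpf⟩ := Submodule.mem_inf.mp hp
    rw [mem_idealOf] at hpi hpf ⊢
    intro a ha
    obtain ⟨w1, hw1, hw1a⟩ := hpi a ha
    obtain ⟨w2, hw2, hw2a⟩ := hpf a ha
    obtain ⟨w, hw, hwa⟩ := hmem a ⟨w1, hw1, hw1a⟩ ⟨w2, hw2, hw2a⟩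
    exact ⟨w, hw, hwa⟩

/-! ### Transfer of the condition `Dcond` along the shift operator -/

theorem shift_seqLT_iff {d t : ℕ} {f g : Fin d → ℕ} (hf : ∀ j : Fin d, (j : ℕ) * t < f j)
    (hg : ∀ j : Fin d, (j : ℕ) * t < g j) :
    seqLT f g ↔ seqLT (fun j => f j - (j : ℕ) * t) (fun j => g j - (j : ℕ) * t) := by
  constructor
  · rintro ⟨s, hpre, hlt⟩
    exact ⟨s, fun j hj => by
      show f j - (j : ℕ) * t = g j - (j : ℕ) * t
      rw [hpre j hj],
      by have h1 := hf s; have h2 := hg s; dsimp only []; omega⟩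
  · rintro ⟨s, hpre, hlt⟩
    refine ⟨s, fun j hj => ?_, ?_⟩
    · have h1 := hpre j hj
      have h2 := hf j
      have h3 := hg j
      dsimp only [] at h1
      omega
    · have h2 := hf s
      have h3 := hg s
      dsimp only [] at hlt
      omega

theorem shift_seqLE_iff {d t : ℕ} {f g : Fin d → ℕ} (hf : ∀ j : Fin d, (j : ℕ) * t < f j)
    (hg : ∀ j : Fin d, (j : ℕ) * t < g j) :
    seqLE f g ↔ seqLE (fun j => f j - (j : ℕ) * t) (fun j => g j - (j : ℕ) * t) := by
  constructor
  · rintro (rfl | h)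
    · exact Or.inl rfl
    · exact Or.inr ((shift_seqLT_iff hf hg).mp h)
  · rintro (h | h)
    · refine Or.inl (funext fun j => ?_)
      have h1 : f j - (j : ℕ) * t = g j - (j : ℕ) * t := congrFun h j
      have h2 := hf j
      have h3 := hg j
      omega
    · exact Or.inr ((shift_seqLT_iff hf hg).mpr h)

def lift (n d t : ℕ) (z : SpreadMono (n - (d - 1) * t) d 0) : SpreadMono n d t where
  idx j := z.idx j + (j : ℕ) * t
  one_le := by
    intro j
    show 1 ≤ z.idx j + (j : ℕ) * t
    have := z.one_le j
    omega
  le_n := by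
    intro j
    have h1 := z.le_n j
    have h2 := z.one_le j
    have hj : (j : ℕ) ≤ d - 1 := by have := j.isLt; omega
    have h3 : (j : ℕ) * t ≤ (d - 1) * t := Nat.mul_le_mul_right t hj
    show z.idx j + (j : ℕ) * t ≤ n
    omega
  spread := by
    intro j h
    have h1 := z.spread j h
    have h4 : ((⟨(j : ℕ) + 1, h⟩ : Fin d) : ℕ) * t = (j : ℕ) * t + t := by
      rw [show ((⟨(j : ℕ) + 1, h⟩ : Fin d) : ℕ) = (j : ℕ) + 1 from rfl]
      exact Nat.succ_mul _ _
    show z.idx j + (j : ℕ) * t + t ≤ z.idx ⟨(j : ℕ) + 1, h⟩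
      + ((⟨(j : ℕ) + 1, h⟩ : Fin d) : ℕ) * t
    omega

theorem Dcond_transfer {n d t : ℕ} (hd : 1 ≤ d) (u v : SpreadMono n d t)
    (τ : SpreadMono n d t → SpreadMono (n - (d - 1) * t) d 0)
    (hτ : ∀ w j, (τ w).idx j = w.idx j - (j : ℕ) * t) :
    Dcond u v ↔ Dcond (τ u) (τ v) := by
  have hidx : ∀ w : SpreadMono n d t, (τ w).idx = fun j => w.idx j - (j : ℕ) * t :=
    fun w => funext (hτ w)
  have hbound : ∀ (w : SpreadMono n d t) (j : Fin d), (j : ℕ) * t < w.idx j :=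
    fun w j => mul_lt_idx w j
  have hcandbound : ∀ (w : SpreadMono n d t) (j : Fin d), (j : ℕ) * t < cand w j := by
    intro w j
    unfold cand
    split
    · rename_i hj; rw [hj]; omega
    · exact hbound w j
  have hcand : ∀ w : SpreadMono n d t,
      (fun j => cand w j - (j : ℕ) * t) = cand (τ w) := by
    intro w
    funext j
    unfold cand
    by_cases hj : (j : ℕ) = 0
    · rw [if_pos hj, if_pos hj, hj]
      omega
    · rw [if_neg hj, if_neg hj, hτ]
  constructor
  · intro hD z2 hz2
    set w2 := lift n d t z2 with hw2
    have hτw2 : τ w2 = z2 := SpreadMono.ext' (funext fun j => by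
      rw [hτ]
      show z2.idx j + (j : ℕ) * t - (j : ℕ) * t = z2.idx j
      omega)
    have hvw2 : slexGT v w2 := by
      rw [← hτw2] at hz2
      have hz2' : seqLT (τ v).idx (τ w2).idx := hz2
      rw [hidx v, hidx w2] at hz2'
      exact (shift_seqLT_iff (hbound v) (hbound w2)).mpr hz2'
    have hres := hD w2 hvw2
    have hres' := (shift_seqLE_iff (hbound u) (hcandbound w2)).mp hres
    rw [hcand w2, hτw2, ← hidx u] at hres'
    exact hres'
  · intro hD w2 hvw2
    have hz2 : slexGT (τ v) (τ w2) := by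
      have h1 := (shift_seqLT_iff (hbound v) (hbound w2)).mp hvw2
      rw [← hidx v, ← hidx w2] at h1
      exact h1
    have hres := hD (τ w2) hz2
    have hres' : seqLE (τ u).idx (cand (τ w2)) := hres
    rw [hidx u, ← hcand w2] at hres'
    exact (shift_seqLE_iff (hbound u) (hcandbound w2)).mpr hres'

end SpreadAux


/-- **Lemma.** Let `t ≥ 0`, `n,d ≥ 1`, and `u ≥_slex v` in `M_{n,d,t}` with `min(u) = 1` and
`min(v) > 1`. Then `I = (L_t(u,v))` is a completely `t`-spread lexsegment ideal iff
`I^{τ^t} = (L_0(u^{τ^t}, v^{τ^t}))` is a completely `0`-spread lexsegment ideal of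
`K[x_1,…,x_{n-(d-1)t}]`, where `τ^t : x_{i_1}⋯x_{i_d} ↦ ∏_j x_{i_j-(j-1)t}`. -/
theorem stmt10 {K : Type*} [Field K] (n d t : ℕ) (hn : 1 ≤ n) (hd : 1 ≤ d)
    (u v : SpreadMono n d t) (huv : slexGE u v)
    (humin : u.idx ⟨0, hd⟩ = 1) (hvmin : 1 < v.idx ⟨0, hd⟩)
    (τ : SpreadMono n d t → SpreadMono (n - (d - 1) * t) d 0)
    (hτ : ∀ w j, (τ w).idx j = w.idx j - (j : ℕ) * t) :
    idealOf K (lexseg u v) = idealOf K (initialSeg v) ⊓ idealOf K (finalSeg u) ↔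
      idealOf K (lexseg (τ u) (τ v)) =
        idealOf K (initialSeg (τ v)) ⊓ idealOf K (finalSeg (τ u)) := by
  have hn' : 1 ≤ n - (d - 1) * t :=
    le_trans ((τ v).one_le ⟨0, hd⟩) ((τ v).le_n ⟨0, hd⟩)
  have humin' : (τ u).idx ⟨0, hd⟩ = 1 := by
    rw [hτ]
    show u.idx ⟨0, hd⟩ - 0 * t = 1
    rw [humin]
    omega
  have hvmin' : 1 < (τ v).idx ⟨0, hd⟩ := by
    rw [hτ]
    show 1 < v.idx ⟨0, hd⟩ - 0 * t
    omega
  rw [SpreadAux.idealEq_iff_mem K u v, SpreadAux.idealEq_iff_mem K (τ u) (τ v)]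
  constructor
  · intro h
    exact SpreadAux.mem_of_D hn' hd humin' hvmin'
      ((SpreadAux.Dcond_transfer hd u v τ hτ).mp
        (SpreadAux.D_of_mem hn hd humin hvmin h))
  · intro h
    exact SpreadAux.mem_of_D hn hd humin hvmin
      ((SpreadAux.Dcond_transfer hd u v τ hτ).mpr
        (SpreadAux.D_of_mem hn' hd humin' hvmin' h))
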